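/- Let 𝒜 be a complex unital algebra with a linear functional τ : 𝒜 → ℂ satisfying τ(𝟙) = 1, let Z ∈ 𝒜, and write m_i = τ(Z^i). Then for all n, k ≥ 1: Σ_{ν ∈ NC^k(n+k)} R_ν(Z) = Σ_{i=0}^{n-1} m_i · Σ_{ν ∈ NC^{k+1}(k+n−i)} R_ν(Z) + R_k(Z) · m_n. -/

import Mathlib

/-- A partition of `{0,…,n-1}` is non-crossing if no two distinct blocks cross. -/
def IsNonCrossing {n : ℕ} (ν : Finpartition (Finset.univ : Finset (Fin n))) : Prop :=
  ∀ B ∈ ν.parts, ∀ C ∈ ν.parts, B ≠ C →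
    ∀ i ∈ B, ∀ k ∈ B, ∀ j ∈ C, ∀ l ∈ C, i < j → j < k → k < l → False

/-- The first `k` elements of `{0,…,n-1}` all lie in one block of the partition
(this is the defining condition of the class `NC^k`). -/
def FirstTogether {n : ℕ} (k : ℕ)
    (ν : Finpartition (Finset.univ : Finset (Fin n))) : Prop :=
  ∃ B ∈ ν.parts, ∀ i : Fin n, (i : ℕ) < k → i ∈ B

/-- `R_ν(X₁,…,Xₙ) = ∏_{B ∈ ν} R_{|B|}(X_i : i ∈ B)`, the product of cumulant
functionals over the blocks of a partition (arguments in increasing order). -/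
noncomputable def partCum {A : Type*} [Ring A] (R : (k : ℕ) → (Fin k → A) → ℂ)
    {n : ℕ} (X : Fin n → A)
    (ν : Finpartition (Finset.univ : Finset (Fin n))) : ℂ :=
  ∏ B ∈ ν.parts, R B.card (fun i => X (B.orderIsoOfFin rfl i).1)

/-- `R` is the family of free cumulant functionals of `τ` : the moment–cumulant
formula `τ(X₁⋯Xₙ) = Σ_{ν ∈ NC(n)} R_ν(X₁,…,Xₙ)` holds. -/
def MomentCumulant {A : Type*} [Ring A] [Algebra ℂ A] (τ : A →ₗ[ℂ] ℂ)
    (R : (k : ℕ) → (Fin k → A) → ℂ) : Prop :=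
  ∀ n : ℕ, 0 < n → ∀ X : Fin n → A,
    τ (List.ofFn X).prod =
      ∑ᶠ ν : {ν : Finpartition (Finset.univ : Finset (Fin n)) // IsNonCrossing ν},
        partCum R X ν.1

/-- `c^k` sums : `ncSum R Z k m = Σ_{ν ∈ NC^k(m)} R_ν(Z,…,Z)`. -/
noncomputable def ncSum {A : Type*} [Ring A] (R : (k : ℕ) → (Fin k → A) → ℂ)
    (Z : A) (k m : ℕ) : ℂ :=
  ∑ᶠ ν : {ν : Finpartition (Finset.univ : Finset (Fin m)) //
      IsNonCrossing ν ∧ FirstTogether k ν},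
    partCum R (fun _ => Z) ν.1

/-- `X` and `Y` are freely independent: all their mixed free cumulants vanish. -/
def FreeIndep {A : Type*} [Ring A] (R : (k : ℕ) → (Fin k → A) → ℂ)
    (X Y : A) : Prop :=
  ∀ k : ℕ, ∀ W : Fin k → A,
    (∀ i, W i = X ∨ W i = Y) → (∃ i j, W i ≠ W j) → R k W = 0


open Finset

section Glue

variable {a b m : ℕ} (g : Fin a → Fin m) (h : Fin b → Fin m)

/-- preimage of a block under an embedding -/
def ncPre (B : Finset (Fin m)) : Finset (Fin a) := univ.filter (fun x => g x ∈ B)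

@[simp] lemma mem_ncPre {B : Finset (Fin m)} {x : Fin a} : x ∈ ncPre g B ↔ g x ∈ B := by
  simp [ncPre]

lemma image_ncPre {B : Finset (Fin m)} (hB : ∀ z ∈ B, ∃ x, g x = z) :
    (ncPre g B).image g = B := by
  ext z
  simp only [mem_image, mem_ncPre]
  constructor
  · rintro ⟨x, hx, rfl⟩; exact hx
  · intro hz; obtain ⟨x, rfl⟩ := hB z hz; exact ⟨x, hz, rfl⟩

lemma ncPre_image (hg : Function.Injective g) (B : Finset (Fin a)) :
    ncPre g (B.image g) = B := by
  ext x
  simp only [mem_ncPre, mem_image]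
  constructor
  · rintro ⟨y, hy, hyx⟩; rwa [← hg hyx]
  · intro hx; exact ⟨x, hx, rfl⟩

lemma card_ncPre (hg : Function.Injective g) {B : Finset (Fin m)}
    (hB : ∀ z ∈ B, ∃ x, g x = z) : (ncPre g B).card = B.card := by
  rw [← card_image_of_injective (ncPre g B) hg, image_ncPre g hB]

/-- the parts of the split partition -/
def ncPartsSplit (P : Finset (Finset (Fin m))) : Finset (Finset (Fin a)) :=
  (P.filter (fun B => ∀ z ∈ B, ∃ x, g x = z)).image (ncPre g)

end Glue

section GlueDef

variable {a b m : ℕ} (g : Fin a → Fin m) (h : Fin b → Fin m)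
  (hg : Function.Injective g) (hh : Function.Injective h)
  (hdisj : ∀ x y, g x ≠ h y)
  (hcov : ∀ z, (∃ x, g x = z) ∨ (∃ y, h y = z))

/-- Glue two partitions along complementary embeddings. -/
def ncGlue (P : Finpartition (univ : Finset (Fin a)))
    (Q : Finpartition (univ : Finset (Fin b))) :
    Finpartition (univ : Finset (Fin m)) where
  parts := P.parts.image (·.image g) ∪ Q.parts.image (·.image h)
  supIndep := by
    rw [Finset.supIndep_iff_pairwiseDisjoint]
    rintro B hB C hC hne
    simp only [coe_union, coe_image, Set.mem_union, Set.mem_image, mem_coe] at hB hC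
    have cross : ∀ (B₀ : Finset (Fin a)) (C₀ : Finset (Fin b)),
        Disjoint (B₀.image g) (C₀.image h) := by
      intro B₀ C₀
      rw [Finset.disjoint_left]
      rintro z hz hz'
      simp only [mem_image] at hz hz'
      obtain ⟨x, -, rfl⟩ := hz
      obtain ⟨y, -, hy⟩ := hz'
      exact hdisj x y hy.symm
    rcases hB with ⟨B₀, hB₀, rfl⟩ | ⟨B₀, hB₀, rfl⟩ <;>
      rcases hC with ⟨C₀, hC₀, rfl⟩ | ⟨C₀, hC₀, rfl⟩
    · have : B₀ ≠ C₀ := by rintro rfl; exact hne rfl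
      exact (Finset.disjoint_image hg).2 (P.disjoint hB₀ hC₀ this)
    · exact cross B₀ C₀
    · exact (cross C₀ B₀).symm
    · have : B₀ ≠ C₀ := by rintro rfl; exact hne rfl
      exact (Finset.disjoint_image hh).2 (Q.disjoint hB₀ hC₀ this)
  sup_parts := by
    apply Finset.eq_univ_iff_forall.2
    intro z
    rw [Finset.mem_sup]
    rcases hcov z with ⟨x, rfl⟩ | ⟨y, rfl⟩
    · obtain ⟨B₀, hB₀, hx⟩ := P.exists_mem (mem_univ x)
      exact ⟨B₀.image g, mem_union_left _ (mem_image_of_mem _ hB₀),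
        mem_image_of_mem _ hx⟩
    · obtain ⟨B₀, hB₀, hy⟩ := Q.exists_mem (mem_univ y)
      exact ⟨B₀.image h, mem_union_right _ (mem_image_of_mem _ hB₀),
        mem_image_of_mem _ hy⟩
  bot_notMem := by
    intro hbot
    rcases mem_union.1 hbot with hb | hb <;> simp only [mem_image] at hb
    · obtain ⟨B₀, hB₀, hB⟩ := hb
      rw [bot_eq_empty, Finset.image_eq_empty] at hB
      subst hB
      simpa using P.bot_notMem hB₀
    · obtain ⟨B₀, hB₀, hB⟩ := hb
      rw [bot_eq_empty, Finset.image_eq_empty] at hB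
      subst hB
      simpa using Q.bot_notMem hB₀

lemma ncGlue_parts (P : Finpartition (univ : Finset (Fin a)))
    (Q : Finpartition (univ : Finset (Fin b))) :
    (ncGlue g h hg hh hdisj hcov P Q).parts
      = P.parts.image (·.image g) ∪ Q.parts.image (·.image h) := rfl

end GlueDef

section SplitDef

variable {a m : ℕ} (g : Fin a → Fin m)

/-- Split off the part of a partition living inside the range of `g`. -/
def ncSplit (ν : Finpartition (univ : Finset (Fin m)))
    (Hg : ∀ B ∈ ν.parts, (∃ x, g x ∈ B) → ∀ z ∈ B, ∃ x, g x = z) :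
    Finpartition (univ : Finset (Fin a)) where
  parts := ncPartsSplit g ν.parts
  supIndep := by
    rw [Finset.supIndep_iff_pairwiseDisjoint]
    rintro B₀ hB₀ C₀ hC₀ hne
    simp only [ncPartsSplit, coe_image, Set.mem_image, mem_coe, mem_filter] at hB₀ hC₀
    obtain ⟨B, ⟨hB, -⟩, rfl⟩ := hB₀
    obtain ⟨C, ⟨hC, -⟩, rfl⟩ := hC₀
    have hBC : B ≠ C := by rintro rfl; exact hne rfl
    have : Disjoint B C := ν.disjoint hB hC hBC
    show Disjoint (ncPre g B) (ncPre g C)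
    rw [Finset.disjoint_left] at this ⊢
    intro x hx hx'
    rw [mem_ncPre] at hx hx'
    exact this hx hx'
  sup_parts := by
    apply Finset.eq_univ_iff_forall.2
    intro x
    rw [Finset.mem_sup]
    refine ⟨ncPre g (ν.part (g x)), ?_, by simp [ν.mem_part (mem_univ (g x))]⟩
    apply mem_image_of_mem
    rw [mem_filter]
    exact ⟨ν.part_mem.2 (mem_univ _),
      Hg _ (ν.part_mem.2 (mem_univ _)) ⟨x, ν.mem_part (mem_univ _)⟩⟩
  bot_notMem := by
    intro hbot
    simp only [bot_eq_empty, ncPartsSplit, mem_image, mem_filter] at hbot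
    obtain ⟨B, ⟨hB, hBr⟩, hB0⟩ := hbot
    obtain ⟨z, hz⟩ := ν.nonempty_of_mem_parts hB
    obtain ⟨x, rfl⟩ := hBr z hz
    have : x ∈ ncPre g B := by simpa using hz
    rw [hB0] at this
    simp at this

lemma ncSplit_parts (ν : Finpartition (univ : Finset (Fin m))) (Hg) :
    (ncSplit g ν Hg).parts = ncPartsSplit g ν.parts := rfl

end SplitDef

section GlueLemmas

variable {a b m : ℕ} {g : Fin a → Fin m} {h : Fin b → Fin m}
  (hg : Function.Injective g) (hh : Function.Injective h)
  (hdisj : ∀ x y, g x ≠ h y)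
  (hcov : ∀ z, (∃ x, g x = z) ∨ (∃ y, h y = z))

lemma ncGlue_prod (w : ℕ → ℂ) (P : Finpartition (univ : Finset (Fin a)))
    (Q : Finpartition (univ : Finset (Fin b))) :
    ∏ B ∈ (ncGlue g h hg hh hdisj hcov P Q).parts, w B.card
      = (∏ B ∈ P.parts, w B.card) * (∏ B ∈ Q.parts, w B.card) := by
  rw [ncGlue_parts]
  rw [Finset.prod_union]
  · rw [Finset.prod_image, Finset.prod_image]
    · congr 1
      · exact Finset.prod_congr rfl fun B _ => by
          rw [Finset.card_image_of_injective _ hg]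
      · exact Finset.prod_congr rfl fun B _ => by
          rw [Finset.card_image_of_injective _ hh]
    · intro B _ C _ hBC
      exact Finset.image_injective hh hBC
    · intro B _ C _ hBC
      exact Finset.image_injective hg hBC
  · rw [Finset.disjoint_left]
    rintro B hB hB'
    simp only [mem_image] at hB hB'
    obtain ⟨B₀, hB₀, rfl⟩ := hB
    obtain ⟨C₀, hC₀, hC⟩ := hB'
    obtain ⟨x, hx⟩ := P.nonempty_of_mem_parts hB₀
    have : g x ∈ C₀.image h := hC ▸ mem_image_of_mem _ hx
    simp only [mem_image] at this
    obtain ⟨y, -, hy⟩ := this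
    exact hdisj x y hy.symm

lemma ncPartsSplit_ncGlue_left (P : Finpartition (univ : Finset (Fin a)))
    (Q : Finpartition (univ : Finset (Fin b))) :
    ncPartsSplit g (ncGlue g h hg hh hdisj hcov P Q).parts = P.parts := by
  rw [ncGlue_parts, ncPartsSplit, Finset.filter_union]
  have h1 : (P.parts.image (·.image g)).filter (fun B => ∀ z ∈ B, ∃ x, g x = z)
      = P.parts.image (·.image g) := by
    apply Finset.filter_true_of_mem
    intro B hB
    simp only [mem_image] at hB
    obtain ⟨B₀, -, rfl⟩ := hB
    intro z hz
    simp only [mem_image] at hz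
    obtain ⟨x, -, rfl⟩ := hz
    exact ⟨x, rfl⟩
  have h2 : (Q.parts.image (·.image h)).filter (fun B => ∀ z ∈ B, ∃ x, g x = z)
      = ∅ := by
    apply Finset.filter_false_of_mem
    intro B hB
    simp only [mem_image] at hB
    obtain ⟨B₀, hB₀, rfl⟩ := hB
    intro hall
    obtain ⟨y, hy⟩ := Q.nonempty_of_mem_parts hB₀
    obtain ⟨x, hx⟩ := hall (h y) (mem_image_of_mem _ hy)
    exact hdisj x y hx
  rw [h1, h2, Finset.union_empty, Finset.image_image]
  have : ∀ B ∈ P.parts, ncPre g (B.image g) = B := fun B _ => ncPre_image g hg B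
  calc P.parts.image (fun B => ncPre g (B.image g)) = P.parts.image id :=
        Finset.image_congr (fun B hB => this B hB)
    _ = P.parts := Finset.image_id

lemma ncPartsSplit_ncGlue_right (P : Finpartition (univ : Finset (Fin a)))
    (Q : Finpartition (univ : Finset (Fin b))) :
    ncPartsSplit h (ncGlue g h hg hh hdisj hcov P Q).parts = Q.parts := by
  rw [ncGlue_parts, ncPartsSplit, Finset.filter_union]
  have h1 : (Q.parts.image (·.image h)).filter (fun B => ∀ z ∈ B, ∃ y, h y = z)
      = Q.parts.image (·.image h) := by
    apply Finset.filter_true_of_mem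
    intro B hB
    simp only [mem_image] at hB
    obtain ⟨B₀, -, rfl⟩ := hB
    intro z hz
    simp only [mem_image] at hz
    obtain ⟨y, -, rfl⟩ := hz
    exact ⟨y, rfl⟩
  have h2 : (P.parts.image (·.image g)).filter (fun B => ∀ z ∈ B, ∃ y, h y = z)
      = ∅ := by
    apply Finset.filter_false_of_mem
    intro B hB
    simp only [mem_image] at hB
    obtain ⟨B₀, hB₀, rfl⟩ := hB
    intro hall
    obtain ⟨x, hx⟩ := P.nonempty_of_mem_parts hB₀
    obtain ⟨y, hy⟩ := hall (g x) (mem_image_of_mem _ hx)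
    exact hdisj x y hy.symm
  rw [h1, h2, Finset.empty_union, Finset.image_image]
  have : ∀ B ∈ Q.parts, ncPre h (B.image h) = B := fun B _ => ncPre_image h hh B
  calc Q.parts.image (fun B => ncPre h (B.image h)) = Q.parts.image id :=
        Finset.image_congr (fun B hB => this B hB)
    _ = Q.parts := Finset.image_id

lemma ncGlue_ncSplit (ν : Finpartition (univ : Finset (Fin m)))
    (Hsplit : ∀ B ∈ ν.parts, (∀ z ∈ B, ∃ x, g x = z) ∨ (∀ z ∈ B, ∃ y, h y = z))
    (Hg : ∀ B ∈ ν.parts, (∃ x, g x ∈ B) → ∀ z ∈ B, ∃ x, g x = z)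
    (Hh : ∀ B ∈ ν.parts, (∃ y, h y ∈ B) → ∀ z ∈ B, ∃ y, h y = z) :
    ncGlue g h hg hh hdisj hcov (ncSplit g ν Hg) (ncSplit h ν Hh) = ν := by
  apply Finpartition.ext
  rw [ncGlue_parts, ncSplit_parts, ncSplit_parts, ncPartsSplit, ncPartsSplit,
    Finset.image_image, Finset.image_image]
  have e1 : (ν.parts.filter (fun B => ∀ z ∈ B, ∃ x, g x = z)).image
      ((fun B => B.image g) ∘ ncPre g)
      = ν.parts.filter (fun B => ∀ z ∈ B, ∃ x, g x = z) := by
    calc _ = (ν.parts.filter (fun B => ∀ z ∈ B, ∃ x, g x = z)).image id :=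
        Finset.image_congr (fun B hB => by
          simp only [Function.comp, id]
          exact image_ncPre g (Finset.mem_filter.1 hB).2)
      _ = _ := Finset.image_id
  have e2 : (ν.parts.filter (fun B => ∀ z ∈ B, ∃ y, h y = z)).image
      ((fun B => B.image h) ∘ ncPre h)
      = ν.parts.filter (fun B => ∀ z ∈ B, ∃ y, h y = z) := by
    calc _ = (ν.parts.filter (fun B => ∀ z ∈ B, ∃ y, h y = z)).image id :=
        Finset.image_congr (fun B hB => by
          simp only [Function.comp, id]
          exact image_ncPre h (Finset.mem_filter.1 hB).2)
      _ = _ := Finset.image_id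
  rw [e1, e2]
  ext B
  simp only [mem_union, mem_filter]
  constructor
  · rintro (⟨hB, -⟩ | ⟨hB, -⟩) <;> exact hB
  · intro hB
    rcases Hsplit B hB with hc | hc
    · exact Or.inl ⟨hB, hc⟩
    · exact Or.inr ⟨hB, hc⟩

end GlueLemmas

section NCLemmas

variable {a b m : ℕ} {g : Fin a → Fin m} {h : Fin b → Fin m}
  (hg : Function.Injective g) (hh : Function.Injective h)
  (hdisj : ∀ x y, g x ≠ h y)
  (hcov : ∀ z, (∃ x, g x = z) ∨ (∃ y, h y = z))

lemma isNonCrossing_ncGlue (hgm : StrictMono g) (hhm : StrictMono h)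
    (hconv : ∀ (x x' : Fin a) (z : Fin m), g x ≤ z → z ≤ g x' → ∃ x'', g x'' = z)
    {P : Finpartition (univ : Finset (Fin a))}
    {Q : Finpartition (univ : Finset (Fin b))}
    (hP : IsNonCrossing P) (hQ : IsNonCrossing Q) :
    IsNonCrossing (ncGlue g h hg hh hdisj hcov P Q) := by
  intro B hB C hC hne i hi k hk j hj l hl hij hjk hkl
  rw [ncGlue_parts, mem_union] at hB hC
  simp only [mem_image] at hB hC
  rcases hB with ⟨B₀, hB₀, rfl⟩ | ⟨B₀, hB₀, rfl⟩ <;>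
    rcases hC with ⟨C₀, hC₀, rfl⟩ | ⟨C₀, hC₀, rfl⟩
  · simp only [mem_image] at hi hk hj hl
    obtain ⟨i₀, hi₀, rfl⟩ := hi
    obtain ⟨k₀, hk₀, rfl⟩ := hk
    obtain ⟨j₀, hj₀, rfl⟩ := hj
    obtain ⟨l₀, hl₀, rfl⟩ := hl
    have hBC : B₀ ≠ C₀ := by rintro rfl; exact hne rfl
    exact hP B₀ hB₀ C₀ hC₀ hBC i₀ hi₀ k₀ hk₀ j₀ hj₀ l₀ hl₀
      (hgm.lt_iff_lt.1 hij) (hgm.lt_iff_lt.1 hjk) (hgm.lt_iff_lt.1 hkl)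
  · simp only [mem_image] at hi hk hj
    obtain ⟨i₀, hi₀, rfl⟩ := hi
    obtain ⟨k₀, hk₀, rfl⟩ := hk
    obtain ⟨j₀, hj₀, rfl⟩ := hj
    obtain ⟨x, hx⟩ := hconv i₀ k₀ (h j₀) hij.le hjk.le
    exact hdisj x j₀ hx
  · simp only [mem_image] at hj hl hk
    obtain ⟨j₀, hj₀, rfl⟩ := hj
    obtain ⟨l₀, hl₀, rfl⟩ := hl
    obtain ⟨k₀, hk₀, rfl⟩ := hk
    obtain ⟨x, hx⟩ := hconv j₀ l₀ (h k₀) hjk.le hkl.le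
    exact hdisj x k₀ hx
  · simp only [mem_image] at hi hk hj hl
    obtain ⟨i₀, hi₀, rfl⟩ := hi
    obtain ⟨k₀, hk₀, rfl⟩ := hk
    obtain ⟨j₀, hj₀, rfl⟩ := hj
    obtain ⟨l₀, hl₀, rfl⟩ := hl
    have hBC : B₀ ≠ C₀ := by rintro rfl; exact hne rfl
    exact hQ B₀ hB₀ C₀ hC₀ hBC i₀ hi₀ k₀ hk₀ j₀ hj₀ l₀ hl₀
      (hhm.lt_iff_lt.1 hij) (hhm.lt_iff_lt.1 hjk) (hhm.lt_iff_lt.1 hkl)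

lemma isNonCrossing_ncSplit (hgm : StrictMono g)
    {ν : Finpartition (univ : Finset (Fin m))} {Hg}
    (hν : IsNonCrossing ν) : IsNonCrossing (ncSplit g ν Hg) := by
  intro B₀ hB₀ C₀ hC₀ hne i₀ hi k₀ hk j₀ hj l₀ hl h1 h2 h3
  rw [ncSplit_parts, ncPartsSplit] at hB₀ hC₀
  simp only [mem_image, mem_filter] at hB₀ hC₀
  obtain ⟨B, ⟨hB, -⟩, rfl⟩ := hB₀
  obtain ⟨C, ⟨hC, -⟩, rfl⟩ := hC₀
  have hBC : B ≠ C := by rintro rfl; exact hne rfl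
  rw [mem_ncPre] at hi hk hj hl
  exact hν B hB C hC hBC (g i₀) hi (g k₀) hk (g j₀) hj (g l₀) hl
    (hgm h1) (hgm h2) (hgm h3)

end NCLemmas

section Sums

instance {n : ℕ} (ν : Finpartition (univ : Finset (Fin n))) :
    Decidable (IsNonCrossing ν) := by
  unfold IsNonCrossing; infer_instance

instance {n k : ℕ} (ν : Finpartition (univ : Finset (Fin n))) :
    Decidable (FirstTogether k ν) := by
  unfold FirstTogether; infer_instance

variable {A : Type*} [Ring A]

/-- the set `NC^k(m)` as a finset -/
def NCF (k m : ℕ) : Finset (Finpartition (univ : Finset (Fin m))) :=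
  univ.filter (fun ν => IsNonCrossing ν ∧ FirstTogether k ν)

/-- the set `NC(m)` as a finset -/
def NCA (m : ℕ) : Finset (Finpartition (univ : Finset (Fin m))) :=
  univ.filter (fun ν => IsNonCrossing ν)

lemma partCum_const (R : (k : ℕ) → (Fin k → A) → ℂ) (Z : A) {m : ℕ}
    (ν : Finpartition (univ : Finset (Fin m))) :
    partCum R (fun _ => Z) ν = ∏ B ∈ ν.parts, R B.card (fun _ => Z) := rfl

lemma ncSum_eq_sum (R : (k : ℕ) → (Fin k → A) → ℂ) (Z : A) (k m : ℕ) :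
    ncSum R Z k m = ∑ ν ∈ NCF k m, ∏ B ∈ ν.parts, R B.card (fun _ => Z) := by
  rw [ncSum, finsum_eq_sum_of_fintype]
  rw [← Finset.sum_subtype (NCF k m) (fun x => by simp [NCF])
    (fun ν => partCum R (fun _ => Z) ν)]
  exact Finset.sum_congr rfl (fun ν _ => partCum_const R Z ν)

lemma moment_eq_sum {A : Type*} [Ring A] [Algebra ℂ A] (τ : A →ₗ[ℂ] ℂ)
    (hτ1 : τ 1 = 1) (R : (k : ℕ) → (Fin k → A) → ℂ) (hR : MomentCumulant τ R)
    (Z : A) (i : ℕ) :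
    τ (Z ^ i) = ∑ ν ∈ NCA i, ∏ B ∈ ν.parts, R B.card (fun _ => Z) := by
  rcases Nat.eq_zero_or_pos i with rfl | hi
  · have h0 : ∀ ν : Finpartition (univ : Finset (Fin 0)), ν.parts = ∅ := by
      intro ν
      rw [Finpartition.parts_eq_empty_iff]
      simp
    have hU : NCA 0 = univ := by
      apply Finset.filter_true_of_mem
      intro ν _ B hB
      simp [h0 ν] at hB
    rw [hU]
    have : ∀ ν ∈ (univ : Finset (Finpartition (univ : Finset (Fin 0)))),
        ∏ B ∈ ν.parts, R B.card (fun _ => Z) = 1 := by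
      intro ν _; rw [h0 ν, Finset.prod_empty]
    rw [Finset.sum_congr rfl this, Finset.sum_const, pow_zero, hτ1]
    haveI : Subsingleton (Finpartition (univ : Finset (Fin 0))) :=
      ⟨fun P Q => Finpartition.ext (by rw [h0 P, h0 Q])⟩
    haveI : Nonempty (Finpartition (univ : Finset (Fin 0))) :=
      ⟨(Finpartition.empty (Finset (Fin 0))).copy (by simp)⟩
    haveI : Unique (Finpartition (univ : Finset (Fin 0))) :=
      uniqueOfSubsingleton (Classical.arbitrary _)
    simp [Finset.card_univ]
  · have := hR i hi (fun _ => Z)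
    rw [List.ofFn_const, List.prod_replicate] at this
    rw [this, finsum_eq_sum_of_fintype,
      ← Finset.sum_subtype (NCA i) (fun x => by simp [NCA])
        (fun ν => partCum R (fun _ => Z) ν)]
    exact Finset.sum_congr rfl (fun ν _ => partCum_const R Z ν)

end Sums

section Embeddings

/-- embedding of the inner interval `[k, k+i)` -/
def embI (n k i : ℕ) (hi : i ≤ n) : Fin i → Fin (n + k) :=
  fun x => ⟨k + x.1, by have := x.isLt; omega⟩

/-- embedding of the outer region `[0,k) ∪ [k+i, n+k)` -/
def embO (n k i : ℕ) (hi : i ≤ n) : Fin (k + n - i) → Fin (n + k) :=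
  fun y => if y.1 < k then ⟨y.1, by have := y.isLt; omega⟩
    else ⟨y.1 + i, by have := y.isLt; omega⟩

lemma embI_val {n k i : ℕ} (hi : i ≤ n) (x : Fin i) :
    (embI n k i hi x).1 = k + x.1 := rfl

lemma embO_val {n k i : ℕ} (hi : i ≤ n) (y : Fin (k + n - i)) :
    (embO n k i hi y).1 = if y.1 < k then y.1 else y.1 + i := by
  unfold embO; split <;> rfl

lemma strictMono_embI {n k i : ℕ} (hi : i ≤ n) : StrictMono (embI n k i hi) := by
  intro x y hxy
  rw [Fin.lt_def] at hxy ⊢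
  rw [embI_val, embI_val]
  omega

lemma strictMono_embO {n k i : ℕ} (hi : i ≤ n) : StrictMono (embO n k i hi) := by
  intro x y hxy
  rw [Fin.lt_def] at hxy ⊢
  rw [embO_val, embO_val]
  split <;> split <;> omega

lemma embI_embO_disj {n k i : ℕ} (hi : i ≤ n) :
    ∀ x y, embI n k i hi x ≠ embO n k i hi y := by
  intro x y hxy
  have h1 := congrArg Fin.val hxy
  rw [embI_val, embO_val] at h1
  have := x.isLt
  have := y.isLt
  split at h1 <;> omega

lemma embI_mem_range {n k i : ℕ} (hi : i ≤ n) (z : Fin (n + k)) :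
    (∃ x, embI n k i hi x = z) ↔ k ≤ z.1 ∧ z.1 < k + i := by
  constructor
  · rintro ⟨x, rfl⟩
    rw [embI_val]
    have := x.isLt
    omega
  · rintro ⟨h1, h2⟩
    refine ⟨⟨z.1 - k, by omega⟩, ?_⟩
    apply Fin.ext
    rw [embI_val]
    simp only [Fin.val_mk]
    omega

lemma embO_mem_range {n k i : ℕ} (hi : i ≤ n) (z : Fin (n + k)) :
    (∃ y, embO n k i hi y = z) ↔ z.1 < k ∨ k + i ≤ z.1 := by
  constructor
  · rintro ⟨y, rfl⟩
    rw [embO_val]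
    have := y.isLt
    split <;> omega
  · intro h1
    have hz := z.isLt
    rcases h1 with h1 | h1
    · refine ⟨⟨z.1, by omega⟩, ?_⟩
      apply Fin.ext
      rw [embO_val]
      simp only
      rw [if_pos h1]
    · refine ⟨⟨z.1 - i, by omega⟩, ?_⟩
      apply Fin.ext
      rw [embO_val]
      have hik : ¬ ((z.1 - i : ℕ) < k) := by omega
      rw [if_neg hik]
      simp only [Fin.val_mk]
      omega

lemma embIO_cov {n k i : ℕ} (hi : i ≤ n) (z : Fin (n + k)) :
    (∃ x, embI n k i hi x = z) ∨ (∃ y, embO n k i hi y = z) := by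
  rw [embI_mem_range hi, embO_mem_range hi]
  omega

lemma embI_conv {n k i : ℕ} (hi : i ≤ n) :
    ∀ (x x' : Fin i) (z : Fin (n + k)),
      embI n k i hi x ≤ z → z ≤ embI n k i hi x' → ∃ x'', embI n k i hi x'' = z := by
  intro x x' z h1 h2
  rw [Fin.le_def, embI_val] at h1 h2
  rw [embI_mem_range hi]
  have := x'.isLt
  omega

end Embeddings

section Phi

/-- helper: convert the two-sided range condition into the one-sided one -/
lemma Hsplit_to_Hg {a b m : ℕ} {g : Fin a → Fin m} {h : Fin b → Fin m}
    (hdisj : ∀ x y, g x ≠ h y) {ν : Finpartition (univ : Finset (Fin m))}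
    (Hsplit : ∀ B ∈ ν.parts, (∀ z ∈ B, ∃ x, g x = z) ∨ (∀ z ∈ B, ∃ y, h y = z)) :
    (∀ B ∈ ν.parts, (∃ x, g x ∈ B) → ∀ z ∈ B, ∃ x, g x = z) ∧
    (∀ B ∈ ν.parts, (∃ y, h y ∈ B) → ∀ z ∈ B, ∃ y, h y = z) := by
  constructor
  · rintro B hB ⟨x, hx⟩
    rcases Hsplit B hB with hc | hc
    · exact hc
    · obtain ⟨y, hy⟩ := hc _ hx
      exact absurd hy.symm (hdisj x y)
  · rintro B hB ⟨y, hy⟩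
    rcases Hsplit B hB with hc | hc
    · obtain ⟨x, hx⟩ := hc _ hy
      exact absurd hx (hdisj x y)
    · exact hc

/-- the statistic `φ`: distance from `k` to the first element of the block of `0`
beyond `k`, or `n` if there is none. -/
def phiNC (n k : ℕ) (h0 : 0 < n + k)
    (ν : Finpartition (univ : Finset (Fin (n + k)))) : ℕ :=
  if hne : ((ν.part ⟨0, h0⟩).filter (fun z => k ≤ z.1)).Nonempty then
    (((ν.part ⟨0, h0⟩).filter (fun z => k ≤ z.1)).min' hne).1 - k
  else n

lemma phiNC_le (n k : ℕ) (h0 : 0 < n + k)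
    (ν : Finpartition (univ : Finset (Fin (n + k)))) : phiNC n k h0 ν ≤ n := by
  unfold phiNC
  split
  · next hne =>
    have := (((ν.part ⟨0, h0⟩).filter (fun z => k ≤ z.1)).min' hne).isLt
    omega
  · exact le_rfl

lemma mem_part0 {n k : ℕ} (hk : 1 ≤ k) (h0 : 0 < n + k)
    {ν : Finpartition (univ : Finset (Fin (n + k)))} (hFT : FirstTogether k ν) :
    ∀ z : Fin (n + k), z.1 < k → z ∈ ν.part ⟨0, h0⟩ := by
  obtain ⟨B, hB, hBk⟩ := hFT
  have h0B : (⟨0, h0⟩ : Fin (n + k)) ∈ B := hBk _ (by show 0 < k; omega)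
  rw [ν.part_eq_of_mem hB h0B]
  exact hBk

lemma phiNC_lt_iff {n k i : ℕ} (h0 : 0 < n + k) (hi : i < n)
    {ν : Finpartition (univ : Finset (Fin (n + k)))} :
    phiNC n k h0 ν = i ↔
      (∃ hki : k + i < n + k, (⟨k + i, hki⟩ : Fin (n + k)) ∈ ν.part ⟨0, h0⟩) ∧
      (∀ z ∈ ν.part ⟨0, h0⟩, k ≤ z.1 → k + i ≤ z.1) := by
  unfold phiNC
  by_cases hne : ((ν.part ⟨0, h0⟩).filter (fun z => k ≤ z.1)).Nonempty
  · rw [dif_pos hne]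
    have hmin : ((ν.part ⟨0, h0⟩).filter (fun z => k ≤ z.1)).min' hne ∈
        (ν.part ⟨0, h0⟩).filter (fun z => k ≤ z.1) := Finset.min'_mem _ hne
    rw [mem_filter] at hmin
    constructor
    · intro hphi
      have hval : (((ν.part ⟨0, h0⟩).filter (fun z => k ≤ z.1)).min' hne).1 = k + i := by
        omega
      have hlt := (((ν.part ⟨0, h0⟩).filter (fun z => k ≤ z.1)).min' hne).isLt
      refine ⟨⟨by omega, by
        rw [show (⟨k + i, by omega⟩ : Fin (n + k))
          = ((ν.part ⟨0, h0⟩).filter (fun z => k ≤ z.1)).min' hne from (Fin.ext hval.symm)]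
        exact hmin.1⟩, ?_⟩
      intro z hz hkz
      have : ((ν.part ⟨0, h0⟩).filter (fun z => k ≤ z.1)).min' hne ≤ z :=
        Finset.min'_le _ z (mem_filter.2 ⟨hz, hkz⟩)
      rw [Fin.le_def] at this
      omega
    · rintro ⟨⟨hki, hmem⟩, hall⟩
      have h1 : ((ν.part ⟨0, h0⟩).filter (fun z => k ≤ z.1)).min' hne ≤ ⟨k + i, hki⟩ :=
        Finset.min'_le _ _ (mem_filter.2 ⟨hmem, by simp⟩)
      rw [Fin.le_def] at h1
      have h2 := hall _ hmin.1 hmin.2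
      simp only [Fin.val_mk] at h1
      omega
  · rw [dif_neg hne]
    constructor
    · intro h; omega
    · rintro ⟨⟨hki, hmem⟩, -⟩
      exact absurd ⟨_, mem_filter.2 ⟨hmem, by simp⟩⟩ hne

lemma phiNC_eq_n_iff {n k : ℕ} (hn : 1 ≤ n) (h0 : 0 < n + k)
    {ν : Finpartition (univ : Finset (Fin (n + k)))} :
    phiNC n k h0 ν = n ↔ ∀ z ∈ ν.part ⟨0, h0⟩, z.1 < k := by
  unfold phiNC
  by_cases hne : ((ν.part ⟨0, h0⟩).filter (fun z => k ≤ z.1)).Nonempty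
  · rw [dif_pos hne]
    have hlt := (((ν.part ⟨0, h0⟩).filter (fun z => k ≤ z.1)).min' hne).isLt
    have hmin := ((ν.part ⟨0, h0⟩).filter (fun z => k ≤ z.1)).min'_mem hne
    rw [mem_filter] at hmin
    constructor
    · intro h; omega
    · intro hall
      exact absurd (hall _ hmin.1) (by omega)
  · rw [dif_neg hne]
    simp only [Finset.not_nonempty_iff_eq_empty, Finset.filter_eq_empty_iff] at hne
    constructor
    · intro _ z hz
      by_contra hc
      exact hne hz (by omega)
    · intro _; rfl

end Phi

section Fibers

variable {A : Type*} [Ring A]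

lemma fiber_struct {n k i : ℕ} (hk : 1 ≤ k) (hi : i < n) (h0 : 0 < n + k)
    {ν : Finpartition (univ : Finset (Fin (n + k)))} (hNC : IsNonCrossing ν)
    (hFT : FirstTogether k ν) (hphi : phiNC n k h0 ν = i) :
    ∀ C ∈ ν.parts, (∀ z ∈ C, ∃ x, embI n k i hi.le x = z) ∨
      (∀ z ∈ C, ∃ y, embO n k i hi.le y = z) := by
  have hpart0 := mem_part0 hk h0 hFT
  obtain ⟨⟨hki, hmem⟩, hmin⟩ := (phiNC_lt_iff h0 hi).1 hphi
  have hBparts : ν.part ⟨0, h0⟩ ∈ ν.parts := ν.part_mem.2 (mem_univ _)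
  intro C hC
  by_cases hCB : C = ν.part ⟨0, h0⟩
  · subst hCB
    right
    intro z hz
    rw [embO_mem_range]
    by_cases hzk : k ≤ z.1
    · exact Or.inr (hmin z hz hzk)
    · exact Or.inl (by omega)
  · by_cases hmeet : ∃ z₀ ∈ C, k ≤ z₀.1 ∧ z₀.1 < k + i
    · left
      obtain ⟨z₀, hz₀C, hz₀1, hz₀2⟩ := hmeet
      intro z hz
      rw [embI_mem_range]
      by_contra hcon
      push_neg at hcon
      rcases Nat.lt_or_ge z.1 k with hzk | hzk
      · exact hCB (ν.eq_of_mem_parts hC hBparts hz (hpart0 z hzk))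
      · have hge : k + i ≤ z.1 := hcon hzk
        rcases Nat.eq_or_lt_of_le hge with h'' | hio
        · exfalso
          apply hCB
          have hze : z = ⟨k + i, hki⟩ := Fin.ext h''.symm
          exact ν.eq_of_mem_parts hC hBparts hz (hze ▸ hmem)
        have hk1 : (k - 1 : ℕ) < n + k := by omega
        have hk1B : (⟨k - 1, hk1⟩ : Fin (n + k)) ∈ ν.part ⟨0, h0⟩ :=
          hpart0 _ (by simp; omega)
        exact hNC (ν.part ⟨0, h0⟩) hBparts C hC (fun hh => hCB hh.symm)
          ⟨k - 1, hk1⟩ hk1B ⟨k + i, hki⟩ hmem z₀ hz₀C z hz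
          (by rw [Fin.lt_def]; simp; omega) (by rw [Fin.lt_def]; simp; omega)
          (by rw [Fin.lt_def]; simp; omega)
    · right
      push_neg at hmeet
      intro z hz
      rw [embO_mem_range]
      rcases Nat.lt_or_ge z.1 k with hzk | hzk
      · exact Or.inl hzk
      · exact Or.inr (hmeet z hz hzk)

lemma fiber_sum_lt (R : (j : ℕ) → (Fin j → A) → ℂ) (Z : A) {n k i : ℕ}
    (hk : 1 ≤ k) (hn : 1 ≤ n) (hi : i < n) (h0 : 0 < n + k) :
    ∑ ν ∈ (NCF k (n + k)).filter (fun ν => phiNC n k h0 ν = i),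
        ∏ B ∈ ν.parts, R B.card (fun _ => Z)
      = (∑ π ∈ NCA i, ∏ B ∈ π.parts, R B.card (fun _ => Z)) *
        (∑ σ ∈ NCF (k + 1) (k + n - i), ∏ B ∈ σ.parts, R B.card (fun _ => Z)) := by
  have hgm := strictMono_embI (n := n) (k := k) (i := i) hi.le
  have hhm := strictMono_embO (n := n) (k := k) (i := i) hi.le
  have hg := hgm.injective
  have hh := hhm.injective
  have hdisj := embI_embO_disj (n := n) (k := k) (i := i) hi.le
  have hcov := embIO_cov (n := n) (k := k) (i := i) hi.le
  have hconv := embI_conv (n := n) (k := k) (i := i) hi.le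
  rw [Finset.sum_mul_sum, ← Finset.sum_product']
  refine (Finset.sum_bij
    (fun p _ => ncGlue (embI n k i hi.le) (embO n k i hi.le) hg hh hdisj hcov p.1 p.2)
    ?_ ?_ ?_ ?_).symm
  · -- membership
    intro p hp
    rw [mem_product] at hp
    obtain ⟨hp1, hp2⟩ := hp
    rw [NCA, mem_filter] at hp1
    rw [NCF, mem_filter] at hp2
    obtain ⟨-, hQNC, hQFT⟩ := hp2
    obtain ⟨B₀, hB₀, hB₀k⟩ := hQFT
    have hpic : B₀.image (embO n k i hi.le)
        ∈ (ncGlue (embI n k i hi.le) (embO n k i hi.le) hg hh hdisj hcov p.1 p.2).parts := by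
      rw [ncGlue_parts]
      exact mem_union_right _ (mem_image_of_mem _ hB₀)
    have h0m : (⟨0, h0⟩ : Fin (n + k)) ∈ B₀.image (embO n k i hi.le) := by
      refine mem_image.2 ⟨⟨0, by omega⟩, hB₀k _ (by simp), ?_⟩
      apply Fin.ext
      rw [embO_val]
      simp only [Fin.val_mk]
      split <;> omega
    have hpeq : (ncGlue (embI n k i hi.le) (embO n k i hi.le) hg hh hdisj hcov
        p.1 p.2).part ⟨0, h0⟩ = B₀.image (embO n k i hi.le) :=
      Finpartition.part_eq_of_mem _ hpic h0m
    rw [mem_filter]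
    constructor
    · rw [NCF, mem_filter]
      refine ⟨mem_univ _, isNonCrossing_ncGlue hg hh hdisj hcov hgm hhm hconv hp1.2 hQNC, ?_⟩
      refine ⟨B₀.image (embO n k i hi.le), hpic, ?_⟩
      intro z hzk
      refine mem_image.2 ⟨⟨z.1, by omega⟩, hB₀k _ (by simp; omega), ?_⟩
      apply Fin.ext
      rw [embO_val]
      simp only [Fin.val_mk]
      split <;> omega
    · rw [phiNC_lt_iff h0 hi, hpeq]
      constructor
      · refine ⟨by omega, ?_⟩
        refine mem_image.2 ⟨⟨k, by omega⟩, hB₀k _ (by simp), ?_⟩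
        apply Fin.ext
        rw [embO_val]
        simp only [Fin.val_mk]
        split <;> omega
      · intro z hz hkz
        obtain ⟨y, -, rfl⟩ := mem_image.1 hz
        rw [embO_val] at hkz ⊢
        split at hkz
        · omega
        · rw [if_neg (by omega)]
          next hyy => omega
  · -- injectivity
    intro p hp q hq heq'
    have heq : ncGlue (embI n k i hi.le) (embO n k i hi.le) hg hh hdisj hcov p.1 p.2
        = ncGlue (embI n k i hi.le) (embO n k i hi.le) hg hh hdisj hcov q.1 q.2 := heq'
    have h1 : p.1.parts = q.1.parts := by
      rw [← ncPartsSplit_ncGlue_left hg hh hdisj hcov p.1 p.2,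
        ← ncPartsSplit_ncGlue_left hg hh hdisj hcov q.1 q.2, heq]
    have h2 : p.2.parts = q.2.parts := by
      rw [← ncPartsSplit_ncGlue_right hg hh hdisj hcov p.1 p.2,
        ← ncPartsSplit_ncGlue_right hg hh hdisj hcov q.1 q.2, heq]
    exact Prod.ext (Finpartition.ext h1) (Finpartition.ext h2)
  · -- surjectivity
    intro ν hν
    rw [mem_filter] at hν
    obtain ⟨hν1, hphi⟩ := hν
    rw [NCF, mem_filter] at hν1
    obtain ⟨-, hNC, hFT⟩ := hν1
    have Hsplit := fiber_struct hk hi h0 hNC hFT hphi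
    obtain ⟨HgI, HgO⟩ := Hsplit_to_Hg hdisj Hsplit
    refine ⟨(ncSplit _ ν HgI, ncSplit _ ν HgO), ?_, ?_⟩
    · rw [mem_product]
      constructor
      · rw [NCA, mem_filter]
        exact ⟨mem_univ _, isNonCrossing_ncSplit hgm (Hg := HgI) hNC⟩
      · rw [NCF, mem_filter]
        refine ⟨mem_univ _, isNonCrossing_ncSplit hhm (Hg := HgO) hNC, ?_⟩
        obtain ⟨⟨hki, hmem⟩, hmin⟩ := (phiNC_lt_iff h0 hi).1 hphi
        have hpart0 := mem_part0 hk h0 hFT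
        have hBparts : ν.part ⟨0, h0⟩ ∈ ν.parts := ν.part_mem.2 (mem_univ _)
        have hBr : ∀ z ∈ ν.part ⟨0, h0⟩, ∃ y, embO n k i hi.le y = z := by
          rcases Hsplit _ hBparts with hc | hc
          · exfalso
            obtain ⟨x, hx⟩ := hc ⟨0, h0⟩ (ν.mem_part (mem_univ _))
            have := congrArg Fin.val hx
            rw [embI_val] at this
            simp at this
            omega
          · exact hc
        refine ⟨ncPre (embO n k i hi.le) (ν.part ⟨0, h0⟩), ?_, ?_⟩
        · rw [ncSplit_parts, ncPartsSplit]
          exact mem_image_of_mem _ (mem_filter.2 ⟨hBparts, hBr⟩)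
        · intro y hyk
          rw [mem_ncPre]
          rcases Nat.lt_or_ge y.1 k with hy | hy
          · apply hpart0
            rw [embO_val, if_pos hy]
            exact hy
          · have : embO n k i hi.le y = ⟨k + i, hki⟩ := by
              apply Fin.ext
              rw [embO_val, if_neg (by omega)]
              simp only [Fin.val_mk]
              omega
            rw [this]
            exact hmem
    · exact ncGlue_ncSplit hg hh hdisj hcov ν Hsplit HgI HgO
  · -- weights
    intro p hp
    exact (ncGlue_prod hg hh hdisj hcov (fun c => R c (fun _ => Z)) p.1 p.2).symm

/-- embedding of `[0,k)` -/
def embK (n k : ℕ) : Fin k → Fin (n + k) := fun x => ⟨x.1, by have := x.isLt; omega⟩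

/-- embedding of `[k, n+k)` -/
def embT (n k : ℕ) : Fin n → Fin (n + k) := fun y => ⟨k + y.1, by have := y.isLt; omega⟩

lemma strictMono_embK {n k : ℕ} : StrictMono (embK n k) := by
  intro x y hxy
  rw [Fin.lt_def] at hxy ⊢
  exact hxy

lemma strictMono_embT {n k : ℕ} : StrictMono (embT n k) := by
  intro x y hxy
  rw [Fin.lt_def] at hxy ⊢
  simp only [embT, Fin.val_mk]
  omega

lemma embK_embT_disj {n k : ℕ} : ∀ x y, embK n k x ≠ embT n k y := by
  intro x y hxy
  have h1 := congrArg Fin.val hxy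
  simp only [embK, embT, Fin.val_mk] at h1
  have := x.isLt
  omega

lemma embKT_cov {n k : ℕ} (z : Fin (n + k)) :
    (∃ x, embK n k x = z) ∨ (∃ y, embT n k y = z) := by
  have hz := z.isLt
  rcases Nat.lt_or_ge z.1 k with h | h
  · exact Or.inl ⟨⟨z.1, h⟩, Fin.ext rfl⟩
  · refine Or.inr ⟨⟨z.1 - k, by omega⟩, Fin.ext ?_⟩
    simp only [embT, Fin.val_mk]
    omega

lemma embK_mem_range {n k : ℕ} (z : Fin (n + k)) :
    (∃ x, embK n k x = z) ↔ z.1 < k := by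
  constructor
  · rintro ⟨x, rfl⟩
    exact x.isLt
  · intro h
    exact ⟨⟨z.1, h⟩, Fin.ext rfl⟩

lemma embK_conv {n k : ℕ} :
    ∀ (x x' : Fin k) (z : Fin (n + k)),
      embK n k x ≤ z → z ≤ embK n k x' → ∃ x'', embK n k x'' = z := by
  intro x x' z h1 h2
  rw [Fin.le_def] at h1 h2
  rw [embK_mem_range]
  have := x'.isLt
  simp only [embK, Fin.val_mk] at h1 h2
  omega

lemma isNonCrossing_indiscrete {k : ℕ} (hne : (univ : Finset (Fin k)) ≠ ⊥) :
    IsNonCrossing (Finpartition.indiscrete hne) := by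
  intro B hB C hC hBC
  rw [Finpartition.indiscrete_parts, mem_singleton] at hB hC
  exact absurd (hB.trans hC.symm) hBC

lemma fiber_sum_n (R : (j : ℕ) → (Fin j → A) → ℂ) (Z : A) {n k : ℕ}
    (hk : 1 ≤ k) (hn : 1 ≤ n) (h0 : 0 < n + k) :
    ∑ ν ∈ (NCF k (n + k)).filter (fun ν => phiNC n k h0 ν = n),
        ∏ B ∈ ν.parts, R B.card (fun _ => Z)
      = R k (fun _ => Z) * ∑ σ ∈ NCA n, ∏ B ∈ σ.parts, R B.card (fun _ => Z) := by
  have hgm := strictMono_embK (n := n) (k := k)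
  have hhm := strictMono_embT (n := n) (k := k)
  have hg := hgm.injective
  have hh := hhm.injective
  have hdisj := embK_embT_disj (n := n) (k := k)
  have hcov := embKT_cov (n := n) (k := k)
  have hconv := embK_conv (n := n) (k := k)
  have hne : (univ : Finset (Fin k)) ≠ ⊥ :=
    Finset.ne_empty_of_mem (mem_univ (⟨0, hk⟩ : Fin k))
  rw [Finset.mul_sum]
  refine (Finset.sum_bij
    (fun Q _ => ncGlue (embK n k) (embT n k) hg hh hdisj hcov
      (Finpartition.indiscrete hne) Q) ?_ ?_ ?_ ?_).symm
  · -- membership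
    intro Q hQ
    rw [NCA, mem_filter] at hQ
    have hpic : (univ : Finset (Fin k)).image (embK n k)
        ∈ (ncGlue (embK n k) (embT n k) hg hh hdisj hcov
          (Finpartition.indiscrete hne) Q).parts := by
      rw [ncGlue_parts]
      apply mem_union_left
      rw [Finpartition.indiscrete_parts]
      exact mem_image_of_mem _ (mem_singleton_self _)
    have h0m : (⟨0, h0⟩ : Fin (n + k)) ∈ (univ : Finset (Fin k)).image (embK n k) :=
      mem_image.2 ⟨⟨0, hk⟩, mem_univ _, Fin.ext rfl⟩
    have hpeq : (ncGlue (embK n k) (embT n k) hg hh hdisj hcov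
        (Finpartition.indiscrete hne) Q).part ⟨0, h0⟩
          = (univ : Finset (Fin k)).image (embK n k) :=
      Finpartition.part_eq_of_mem _ hpic h0m
    rw [mem_filter]
    refine ⟨?_, ?_⟩
    · rw [NCF, mem_filter]
      refine ⟨mem_univ _, isNonCrossing_ncGlue hg hh hdisj hcov hgm hhm hconv
        (isNonCrossing_indiscrete hne) hQ.2, ?_⟩
      refine ⟨(univ : Finset (Fin k)).image (embK n k), hpic, ?_⟩
      intro z hzk
      exact mem_image.2 ⟨⟨z.1, hzk⟩, mem_univ _, Fin.ext rfl⟩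
    · rw [phiNC_eq_n_iff hn h0, hpeq]
      intro z hz
      obtain ⟨x, -, rfl⟩ := mem_image.1 hz
      exact x.isLt
  · -- injectivity
    intro p hp q hq heq'
    have heq : ncGlue (embK n k) (embT n k) hg hh hdisj hcov
        (Finpartition.indiscrete hne) p
      = ncGlue (embK n k) (embT n k) hg hh hdisj hcov
        (Finpartition.indiscrete hne) q := heq'
    have h2 : p.parts = q.parts := by
      rw [← ncPartsSplit_ncGlue_right hg hh hdisj hcov (Finpartition.indiscrete hne) p,
        ← ncPartsSplit_ncGlue_right hg hh hdisj hcov (Finpartition.indiscrete hne) q, heq]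
    exact Finpartition.ext h2
  · -- surjectivity
    intro ν hν
    rw [mem_filter] at hν
    obtain ⟨hν1, hphi⟩ := hν
    rw [NCF, mem_filter] at hν1
    obtain ⟨-, hNC, hFT⟩ := hν1
    have hpart0 := mem_part0 hk h0 hFT
    have hall := (phiNC_eq_n_iff hn h0).1 hphi
    have hBparts : ν.part ⟨0, h0⟩ ∈ ν.parts := ν.part_mem.2 (mem_univ _)
    have Hsplit : ∀ C ∈ ν.parts, (∀ z ∈ C, ∃ x, embK n k x = z) ∨
        (∀ z ∈ C, ∃ y, embT n k y = z) := by
      intro C hC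
      by_cases hCB : C = ν.part ⟨0, h0⟩
      · subst hCB
        left
        intro z hz
        exact ⟨⟨z.1, hall z hz⟩, Fin.ext rfl⟩
      · right
        intro z hz
        have hzk : ¬ z.1 < k := fun hlt =>
          hCB (ν.eq_of_mem_parts hC hBparts hz (hpart0 z hlt))
        have hzlt := z.isLt
        refine ⟨⟨z.1 - k, by omega⟩, Fin.ext ?_⟩
        simp only [embT, Fin.val_mk]
        omega
    obtain ⟨HgK, HgT⟩ := Hsplit_to_Hg hdisj Hsplit
    have hsplitK : ncSplit (embK n k) ν HgK = Finpartition.indiscrete hne := by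
      apply Finpartition.ext
      rw [ncSplit_parts, Finpartition.indiscrete_parts]
      ext B₀
      rw [ncPartsSplit, mem_image, mem_singleton]
      constructor
      · rintro ⟨B, hB, rfl⟩
        rw [mem_filter] at hB
        obtain ⟨hB, hBr⟩ := hB
        obtain ⟨z, hz⟩ := ν.nonempty_of_mem_parts hB
        obtain ⟨x, hx⟩ := hBr z hz
        have hzk : z.1 < k := hx ▸ x.isLt
        have hBeq : B = ν.part ⟨0, h0⟩ :=
          ν.eq_of_mem_parts hB hBparts hz (hpart0 z hzk)
        subst hBeq
        apply Finset.eq_univ_iff_forall.2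
        intro x
        rw [mem_ncPre]
        exact hpart0 _ x.isLt
      · rintro rfl
        refine ⟨ν.part ⟨0, h0⟩, mem_filter.2 ⟨hBparts, ?_⟩, ?_⟩
        · intro z hz
          exact ⟨⟨z.1, hall z hz⟩, Fin.ext rfl⟩
        · apply Finset.eq_univ_iff_forall.2
          intro x
          rw [mem_ncPre]
          exact hpart0 _ x.isLt
    refine ⟨ncSplit (embT n k) ν HgT, ?_, ?_⟩
    · rw [NCA, mem_filter]
      exact ⟨mem_univ _, isNonCrossing_ncSplit hhm (Hg := HgT) hNC⟩
    · rw [← hsplitK]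
      exact ncGlue_ncSplit hg hh hdisj hcov ν Hsplit HgK HgT
  · -- weights
    intro Q hQ
    rw [ncGlue_prod hg hh hdisj hcov (fun c => R c (fun _ => Z))
      (Finpartition.indiscrete hne) Q]
    congr 1
    rw [Finpartition.indiscrete_parts, Finset.prod_singleton,
      show #(univ : Finset (Fin k)) = k by simp]

end Fibers

set_option maxHeartbeats 2000000 in
/-- Lemma 2.2. For an element `Z` of a complex unital algebra
with a linear functional `τ` satisfying `τ(1) = 1`, with moments `mᵢ = τ(Zⁱ)`
and free cumulants `R`, for all `n, k ≥ 1`: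
`Σ_{ν ∈ NC^k(n+k)} R_ν(Z) = Σ_{i=0}^{n-1} mᵢ Σ_{ν ∈ NC^{k+1}(k+n-i)} R_ν(Z) + R_k(Z) mₙ`. -/
theorem stmt1 {A : Type*} [Ring A] [Algebra ℂ A]
    (τ : A →ₗ[ℂ] ℂ) (hτ1 : τ 1 = 1)
    (R : (k : ℕ) → (Fin k → A) → ℂ) (hR : MomentCumulant τ R)
    (Z : A) (n k : ℕ) (hn : 1 ≤ n) (hk : 1 ≤ k) :
    ncSum R Z k (n + k) =
      (∑ i ∈ Finset.range n, τ (Z ^ i) * ncSum R Z (k + 1) (k + n - i))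
        + R k (fun _ => Z) * τ (Z ^ n) := by
  have h0 : 0 < n + k := by omega
  rw [ncSum_eq_sum]
  rw [← Finset.sum_fiberwise_of_maps_to (g := phiNC n k h0) (t := Finset.range (n + 1))
    (fun ν _ => Finset.mem_range.2 (by have := phiNC_le n k h0 ν; omega))]
  rw [Finset.sum_range_succ]
  congr 1
  · apply Finset.sum_congr rfl
    intro i hi
    rw [Finset.mem_range] at hi
    rw [fiber_sum_lt R Z hk hn hi h0, ← ncSum_eq_sum, ← moment_eq_sum τ hτ1 R hR Z i]
  · rw [fiber_sum_n R Z hk hn h0, ← moment_eq_sum τ hτ1 R hR Z n]
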